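/- Let f be a non-constant meromorphic function on ℂ and P[f] a differential polynomial generated by f, of lower degree d_(P), weight Γ and order k. If z₀ is a zero of f of order t with t ≥ k+1 and z₀ is neither a zero nor a pole of any coefficient b_j, then z₀ is a zero of P[f] of order at least (t+1)·d_(P) − Γ. -/

import Mathlib

open Filter MeasureTheory Classical

open scoped Classical

noncomputable section

namespace Nevanlinna

/-- The multiplicity of `z` as a zero of the meromorphic function `g`
(zero if `g` is not meromorphic at `z`, or has a pole or nonzero value there,
or vanishes identically near `z`). -/
def zeroMult (g : ℂ → ℂ) (z : ℂ) : ℕ :=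
  if h : MeromorphicAt g z then (WithTop.untopD 0 (meromorphicOrderAt g z)).toNat else 0

/-- The multiplicity of `z` as a pole of the meromorphic function `g`. -/
def poleMult (g : ℂ → ℂ) (z : ℂ) : ℕ :=
  if h : MeromorphicAt g z then (-(WithTop.untopD 0 (meromorphicOrderAt g z))).toNat else 0

/-- Unintegrated counting function: the number of points of the closed disc of
radius `r` about the origin, counted according to the multiplicity function `ν`. -/
def nCount (ν : ℂ → ℕ) (r : ℝ) : ℝ :=
  ∑ᶠ z ∈ Metric.closedBall (0 : ℂ) r, (ν z : ℝ)

/-- Integrated (Nevanlinna) counting function associated to a multiplicity function `ν`: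
`N(r) = ν(0)·log r + ∫₀ʳ (n(t) - ν(0))/t dt`. -/
def NCount (ν : ℂ → ℕ) (r : ℝ) : ℝ :=
  (ν 0 : ℝ) * Real.log r + ∫ t in (0 : ℝ)..r, (nCount ν t - (ν 0 : ℝ)) / t

/-- `N(r,0;g)` : integrated counting function of the zeros of `g`, with multiplicity. -/
def Nzero (g : ℂ → ℂ) : ℝ → ℝ := NCount (zeroMult g)

/-- `N̄(r,0;g)` : reduced integrated counting function of the zeros of `g`. -/
def NzeroRed (g : ℂ → ℂ) : ℝ → ℝ := NCount (fun z => min 1 (zeroMult g z))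

/-- `N̄(r,0;g|≥p)` : reduced counting function of the zeros of `g` of multiplicity `≥ p`. -/
def NzeroRedGe (g : ℂ → ℂ) (p : ℕ) : ℝ → ℝ :=
  NCount (fun z => if p ≤ zeroMult g z then 1 else 0)

/-- `N(r,0;g|≥p)` : counting function (with multiplicity) of the zeros of `g`
of multiplicity `≥ p`. -/
def NzeroGe (g : ℂ → ℂ) (p : ℕ) : ℝ → ℝ :=
  NCount (fun z => if p ≤ zeroMult g z then zeroMult g z else 0)

/-- `N(r,0;g|≤p)` : counting function (with multiplicity) of the zeros of `g`
of multiplicity `≤ p`. -/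
def NzeroLe (g : ℂ → ℂ) (p : ℕ) : ℝ → ℝ :=
  NCount (fun z => if zeroMult g z ≤ p then zeroMult g z else 0)

/-- `N_p(r,0;g) = N̄(r,0;g) + N̄(r,0;g|≥2) + ⋯ + N̄(r,0;g|≥p)`. -/
def NzeroTrunc (g : ℂ → ℂ) (p : ℕ) (r : ℝ) : ℝ :=
  ∑ q ∈ Finset.Icc 1 p, NzeroRedGe g q r

/-- `N(r,∞;g)` : integrated counting function of the poles of `g`, with multiplicity. -/
def Npole (g : ℂ → ℂ) : ℝ → ℝ := NCount (poleMult g)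

/-- `N̄(r,∞;g)` : reduced integrated counting function of the poles of `g`. -/
def NpoleRed (g : ℂ → ℂ) : ℝ → ℝ := NCount (fun z => min 1 (poleMult g z))

/-- The positive part of the logarithm, `log⁺ x = max (log x) 0`. -/
def plog (x : ℝ) : ℝ := max (Real.log x) 0

/-- The Nevanlinna proximity function `m(r,g)`. -/
def prox (g : ℂ → ℂ) (r : ℝ) : ℝ :=
  (2 * Real.pi)⁻¹ * ∫ θ in (0 : ℝ)..(2 * Real.pi), plog ‖g (r * Complex.exp (θ * Complex.I))‖

/-- The Nevanlinna characteristic function `T(r,g) = m(r,g) + N(r,∞;g)`. -/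
def charT (g : ℂ → ℂ) (r : ℝ) : ℝ := prox g r + Npole g r

/-- `s = S(r,f)` : `s(r)/T(r,f) → 0` as `r → ∞` outside a set `E` of finite
Lebesgue measure. -/
def IsSmall (s : ℝ → ℝ) (f : ℂ → ℂ) : Prop :=
  ∃ E : Set ℝ, volume E < ⊤ ∧
    Tendsto (fun r => s r / charT f r) (atTop ⊓ Filter.principal Eᶜ) (nhds 0)

/-- `a` is a small function of `f` : `T(r,a) = S(r,f)`. -/
def IsSmallFunction (a f : ℂ → ℂ) : Prop := IsSmall (charT a) f

/-- The deficiency `δ_p(0,g) = 1 - limsup_{r→∞} N_p(r,0;g)/T(r,g)`. -/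
def deltaP (p : ℕ) (g : ℂ → ℂ) : ℝ :=
  1 - Filter.limsup (fun r => NzeroTrunc g p r / charT g r) Filter.atTop

/-- The deficiency `δ(a,f) = 1 - limsup_{r→∞} N(r,a;f)/T(r,f)` of a (small) function `a`. -/
def deltaFn (a f : ℂ → ℂ) : ℝ :=
  1 - Filter.limsup (fun r => Nzero (fun z => f z - a z) r / charT f r) Filter.atTop

/-- `Θ(0,g) = 1 - limsup_{r→∞} N̄(r,0;g)/T(r,g)`. -/
def theta0 (g : ℂ → ℂ) : ℝ :=
  1 - Filter.limsup (fun r => NzeroRed g r / charT g r) Filter.atTop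

/-- `Θ(∞,g) = 1 - limsup_{r→∞} N̄(r,∞;g)/T(r,g)`. -/
def thetaInf (g : ℂ → ℂ) : ℝ :=
  1 - Filter.limsup (fun r => NpoleRed g r / charT g r) Filter.atTop

/-- The differential monomial `M[f] = f^{n₀}·(f')^{n₁}⋯(f^{(k)})^{n_k}`. -/
def diffMono {k : ℕ} (n : Fin (k + 1) → ℕ) (f : ℂ → ℂ) (z : ℂ) : ℂ :=
  ∏ i : Fin (k + 1), (iteratedDeriv i f z) ^ (n i)

/-- The degree `d(M) = Σ_{i=0}^k n_i` of a differential monomial. -/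
def monoDeg {k : ℕ} (n : Fin (k + 1) → ℕ) : ℕ := ∑ i : Fin (k + 1), n i

/-- The weight `Γ_M = Σ_{i=0}^k (i+1)·n_i` of a differential monomial. -/
def monoWt {k : ℕ} (n : Fin (k + 1) → ℕ) : ℕ := ∑ i : Fin (k + 1), (i.1 + 1) * n i

/-- The differential polynomial `P[f] = Σ_{j=1}^t b_j·M_j[f]`. -/
def diffPoly {t k : ℕ} (b : Fin t → ℂ → ℂ) (M : Fin t → Fin (k + 1) → ℕ)
    (f : ℂ → ℂ) (z : ℂ) : ℂ :=
  ∑ j : Fin t, b j z * diffMono (M j) f z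

/-- The functions `g` and `h` share the value `0` with weight `l`, i.e.
`E_l(0;g) = E_l(0;h)` : at every point the multiplicities as zeros of `g` and of `h`,
both truncated at level `l+1`, coincide. -/
def ShareZero (l : ℕ) (g h : ℂ → ℂ) : Prop :=
  ∀ z : ℂ, min (l + 1) (zeroMult g z) = min (l + 1) (zeroMult h z)

/-- `f` is a non-constant meromorphic function on the complex plane. -/
def NonconstMero (f : ℂ → ℂ) : Prop :=
  MeromorphicOn f Set.univ ∧ ¬ ∃ c : ℂ, ∀ z, f z = c

end Nevanlinna

open Nevanlinna

namespace Nev11Aux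
open Filter

lemma analyticAt_deriv' {h : ℂ → ℂ} {z₀ : ℂ} (hh : AnalyticAt ℂ h z₀) :
    AnalyticAt ℂ (deriv h) z₀ := by
  obtain ⟨s, hs, hos⟩ := hh.exists_mem_nhds_analyticOnNhd
  exact hos.deriv _ (mem_of_mem_nhds hs)

lemma iteratedDeriv_eventuallyEq {f g : ℂ → ℂ} {x : ℂ} (h : f =ᶠ[nhds x] g) (n : ℕ) :
    iteratedDeriv n f =ᶠ[nhds x] iteratedDeriv n g := by
  induction n generalizing f g with
  | zero => simpa [iteratedDeriv_zero] using h
  | succ n ih =>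
    rw [iteratedDeriv_succ', iteratedDeriv_succ']
    exact ih h.deriv

lemma iteratedDeriv_eventuallyEq_punctured {f g : ℂ → ℂ} {z₀ : ℂ}
    (h : f =ᶠ[nhdsWithin z₀ {z₀}ᶜ] g) (n : ℕ) :
    iteratedDeriv n f =ᶠ[nhdsWithin z₀ {z₀}ᶜ] iteratedDeriv n g := by
  rw [eventuallyEq_iff_exists_mem] at h ⊢
  obtain ⟨s, hs, hfg⟩ := h
  rw [mem_nhdsWithin] at hs
  obtain ⟨u, hu, hz, hus⟩ := hs
  have hV : IsOpen (u ∩ {z₀}ᶜ) := hu.inter isOpen_compl_singleton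
  refine ⟨u ∩ {z₀}ᶜ, mem_nhdsWithin.mpr ⟨u, hu, hz, fun w hw => hw⟩, fun w hw => ?_⟩
  have hev : f =ᶠ[nhds w] g :=
    eventually_of_mem (hV.mem_nhds hw) (fun y hy => hfg (hus hy))
  exact (iteratedDeriv_eventuallyEq hev n).eq_of_nhds

lemma iteratedDeriv_pow_mul (z₀ : ℂ) :
    ∀ (i s : ℕ) (h : ℂ → ℂ), AnalyticAt ℂ h z₀ →
    ∃ H : ℂ → ℂ, AnalyticAt ℂ H z₀ ∧
      iteratedDeriv i (fun z => (z - z₀) ^ (i + s) * h z) =ᶠ[nhds z₀]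
        fun z => (z - z₀) ^ s * H z := by
  intro i
  induction i with
  | zero => exact fun s h hh => ⟨h, hh, by simp [iteratedDeriv_zero]⟩
  | succ i ih =>
    intro s h hh
    have hh' : AnalyticAt ℂ (deriv h) z₀ := analyticAt_deriv' hh
    set h₁ : ℂ → ℂ := fun z => ((i + 1 + s : ℕ) : ℂ) * h z + (z - z₀) * deriv h z with hh₁def
    have hh₁ : AnalyticAt ℂ h₁ z₀ :=
      (analyticAt_const.mul hh).add ((analyticAt_id.sub analyticAt_const).mul hh')
    have hderiv : deriv (fun z => (z - z₀) ^ (i + 1 + s) * h z) =ᶠ[nhds z₀]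
        fun z => (z - z₀) ^ (i + s) * h₁ z := by
      filter_upwards [hh.eventually_analyticAt] with w hw
      have h1 : HasDerivAt (fun z => (z - z₀) ^ (i + 1 + s))
          (((i + 1 + s : ℕ) : ℂ) * (w - z₀) ^ (i + 1 + s - 1) * 1) w :=
        ((hasDerivAt_id w).sub_const z₀).pow _
      have h2 : HasDerivAt h (deriv h w) w := hw.differentiableAt.hasDerivAt
      rw [(h1.fun_mul h2).deriv]
      have : i + 1 + s - 1 = i + s := by omega
      rw [this, hh₁def]
      ring
    obtain ⟨H, hH, hEq⟩ := ih s h₁ hh₁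
    refine ⟨H, hH, ?_⟩
    rw [iteratedDeriv_succ']
    exact (iteratedDeriv_eventuallyEq hderiv i).trans hEq

lemma order_ge_of_rep {F G : ℂ → ℂ} {z₀ : ℂ} (hF : MeromorphicAt F z₀) (m : ℕ)
    (hG : AnalyticAt ℂ G z₀)
    (h : ∀ᶠ z in nhdsWithin z₀ {z₀}ᶜ, F z = (z - z₀) ^ m * G z) :
    ((m : ℤ) : WithTop ℤ) ≤ meromorphicOrderAt F z₀ := by
  rcases eq_or_ne (analyticOrderAt G z₀) ⊤ with htop | hne
  · have hG0 : ∀ᶠ z in nhds z₀, G z = 0 := analyticOrderAt_eq_top.mp htop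
    have : meromorphicOrderAt F z₀ = ⊤ := meromorphicOrderAt_eq_top_iff.mpr (by
      filter_upwards [h, hG0.filter_mono nhdsWithin_le_nhds] with z h1 h2
      simp [h1, h2])
    simp [this]
  · obtain ⟨n, hn⟩ := ENat.ne_top_iff_exists.mp hne
    obtain ⟨g, hg, hgne, hgeq⟩ := hG.analyticOrderAt_eq_natCast.mp hn.symm
    have hordF : meromorphicOrderAt F z₀ = ((m + n : ℕ) : ℤ) := by
      refine (meromorphicOrderAt_eq_int_iff hF).mpr ⟨g, hg, hgne, ?_⟩
      filter_upwards [h, hgeq.filter_mono nhdsWithin_le_nhds] with z h1 h2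
      rw [h1, h2]
      simp only [smul_eq_mul, zpow_natCast, pow_add]
      ring
    rw [hordF]
    exact_mod_cast (WithTop.coe_le_coe.mpr (by exact_mod_cast Nat.le_add_right m n))

end Nev11Aux


/-- a zero of `f` of order `t ≥ k+1`, at which no coefficient has a zero
or a pole, is a zero of `P[f]` of order at least `(t+1)·d_(P) − Γ`. -/
theorem zero_order_diffPoly_at_deep_zero
    (f : ℂ → ℂ) (hf : NonconstMero f)
    {t k : ℕ} (b : Fin t → ℂ → ℂ) (M : Fin t → Fin (k + 1) → ℕ)
    (hbmero : ∀ j, MeromorphicOn (b j) Set.univ)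
    (hbsmall : ∀ j, IsSmallFunction (b j) f)
    (dlow : ℕ)
    (hdlow : (∀ j, dlow ≤ monoDeg (M j)) ∧ ∃ j, monoDeg (M j) = dlow)
    (Γ : ℕ)
    (hΓ : (∀ j, monoWt (M j) ≤ Γ) ∧ ∃ j, monoWt (M j) = Γ)
    (hord : ∃ j, M j (Fin.last k) ≠ 0)
    (z₀ : ℂ) (tord : ℕ) (ht : k + 1 ≤ tord)
    (hzero : meromorphicOrderAt f z₀ = ((tord : ℤ) : WithTop ℤ))
    (hbz : ∀ j, AnalyticAt ℂ (b j) z₀ ∧ b j z₀ ≠ 0) :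
    ∀ hP : MeromorphicAt (diffPoly b M f) z₀,
      (0 : WithTop ℤ) ≤ meromorphicOrderAt (diffPoly b M f) z₀ ∧
      ((((tord : ℤ) + 1) * dlow - Γ : ℤ) : WithTop ℤ) ≤ meromorphicOrderAt (diffPoly b M f) z₀ := by
  intro hP
  obtain ⟨g, hg, hgne, hfeq⟩ :=
    (meromorphicOrderAt_eq_int_iff (n := (tord : ℤ)) (hf.1 z₀ (Set.mem_univ z₀))).mp hzero
  set g₀ : ℂ → ℂ := fun z => (z - z₀) ^ tord * g z with hg₀def
  have hg₀ : AnalyticAt ℂ g₀ z₀ := ((analyticAt_id.sub analyticAt_const).pow _).mul hg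
  have hfg₀ : f =ᶠ[nhdsWithin z₀ {z₀}ᶜ] g₀ := by
    filter_upwards [hfeq] with z hz
    rw [hz, hg₀def]
    simp [smul_eq_mul, zpow_natCast]
  have hik : ∀ i : Fin (k + 1), i.1 ≤ tord := fun i =>
    le_trans (Nat.le_of_lt_succ i.isLt) (le_trans (Nat.le_succ k) ht)
  have key : ∀ i : Fin (k + 1), ∃ H : ℂ → ℂ, AnalyticAt ℂ H z₀ ∧
      iteratedDeriv i.1 f =ᶠ[nhdsWithin z₀ {z₀}ᶜ]
        fun z => (z - z₀) ^ (tord - i.1) * H z := by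
    intro i
    obtain ⟨H, hH, hEq⟩ := Nev11Aux.iteratedDeriv_pow_mul z₀ i.1 (tord - i.1) g hg
    refine ⟨H, hH, ?_⟩
    have h1 : iteratedDeriv i.1 f =ᶠ[nhdsWithin z₀ {z₀}ᶜ] iteratedDeriv i.1 g₀ :=
      Nev11Aux.iteratedDeriv_eventuallyEq_punctured hfg₀ i.1
    have h2 : iteratedDeriv i.1 g₀ =ᶠ[nhds z₀]
        fun z => (z - z₀) ^ (tord - i.1) * H z := by
      have hfun : (fun z => (z - z₀) ^ (i.1 + (tord - i.1)) * g z) = g₀ := by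
        rw [hg₀def]; funext z; rw [Nat.add_sub_cancel' (hik i)]
      rwa [hfun] at hEq
    exact h1.trans (h2.filter_mono nhdsWithin_le_nhds)
  choose H hHan hHeq using key
  set m : ℕ := (((tord : ℤ) + 1) * dlow - Γ).toNat with hmdef
  set mj : Fin t → ℕ := fun j => ∑ i : Fin (k + 1), (tord - i.1) * M j i with hmjdef
  have hmjcast : ∀ j, (mj j : ℤ) = ((tord : ℤ) + 1) * monoDeg (M j) - monoWt (M j) := by
    intro j
    rw [hmjdef]
    rw [show ((monoDeg (M j) : ℤ)) = ∑ i : Fin (k + 1), (M j i : ℤ) by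
          unfold monoDeg; push_cast; rfl,
        show ((monoWt (M j) : ℤ)) = ∑ i : Fin (k + 1), ((i.1 : ℤ) + 1) * M j i by
          unfold monoWt; push_cast; rfl,
        Finset.mul_sum, ← Finset.sum_sub_distrib]
    push_cast
    refine Finset.sum_congr rfl fun i _ => ?_
    rw [Nat.cast_sub (hik i)]
    ring
  have hmle : ∀ j, m ≤ mj j := by
    intro j
    rw [hmdef]
    apply Int.toNat_le.mpr
    rw [hmjcast j]
    have h1 : ((tord : ℤ) + 1) * dlow ≤ ((tord : ℤ) + 1) * monoDeg (M j) := by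
      apply mul_le_mul_of_nonneg_left (by exact_mod_cast hdlow.1 j) (by positivity)
    have h2 : (monoWt (M j) : ℤ) ≤ Γ := by exact_mod_cast hΓ.1 j
    omega
  set Gall : ℂ → ℂ := fun z => ∑ j : Fin t,
      (z - z₀) ^ (mj j - m) * (b j z * ∏ i : Fin (k + 1), H i z ^ M j i) with hGdef
  have hGan : AnalyticAt ℂ Gall z₀ := by
    apply Finset.analyticAt_fun_sum
    intro j _
    exact ((analyticAt_id.sub analyticAt_const).pow _).mul
      ((hbz j).1.mul (Finset.analyticAt_fun_prod _ fun i _ => (hHan i).pow _))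
  have hrep : ∀ᶠ z in nhdsWithin z₀ {z₀}ᶜ, diffPoly b M f z = (z - z₀) ^ m * Gall z := by
    have hall : ∀ᶠ z in nhdsWithin z₀ {z₀}ᶜ, ∀ i : Fin (k + 1),
        iteratedDeriv i.1 f z = (z - z₀) ^ (tord - i.1) * H i z :=
      eventually_all.mpr fun i => hHeq i
    filter_upwards [hall] with z hz
    rw [hGdef, Finset.mul_sum]
    unfold diffPoly
    refine Finset.sum_congr rfl fun j _ => ?_
    unfold diffMono
    have hprod : ∏ i : Fin (k + 1), (iteratedDeriv i.1 f z) ^ M j i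
        = (z - z₀) ^ (mj j) * ∏ i : Fin (k + 1), H i z ^ M j i := by
      rw [hmjdef, ← Finset.prod_pow_eq_pow_sum, ← Finset.prod_mul_distrib]
      refine Finset.prod_congr rfl fun i _ => ?_
      rw [hz i, mul_pow, pow_mul]
    rw [hprod, show (z - z₀) ^ (mj j) = (z - z₀) ^ m * (z - z₀) ^ (mj j - m) by
      rw [← pow_add, Nat.add_sub_cancel' (hmle j)]]
    ring
  have hord := Nev11Aux.order_ge_of_rep hP m hGan hrep
  constructor
  · refine le_trans ?_ hord
    exact_mod_cast WithTop.coe_le_coe.mpr (Int.natCast_nonneg m)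
  · refine le_trans ?_ hord
    have : (((tord : ℤ) + 1) * dlow - Γ : ℤ) ≤ (m : ℤ) := by
      rw [hmdef]; exact Int.self_le_toNat _
    exact_mod_cast WithTop.coe_le_coe.mpr this
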